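/- For α, β > −1, the Jacobi polynomial ξ_{α+1,β−1,m}(x) = P_m^{(−α−1,β−1)}(x) has degree exactly m and does not vanish at x = ±1 if and only if β ≠ 0 and neither α nor α−β−m+1 belongs to {0, 1, ..., m−1}. -/

import Mathlib

open Polynomial

/-- Generalized binomial coefficient `C(r, k) = r(r−1)⋯(r−k+1)/k!`. -/
noncomputable def rchoose (r : ℝ) (k : ℕ) : ℝ :=
  (∏ i ∈ Finset.range k, (r - (i : ℝ))) / (k.factorial : ℝ)

/-- The Jacobi polynomial `P_n^{(α,β)}` with general real parameters. -/
noncomputable def jacobiP (α β : ℝ) (n : ℕ) : Polynomial ℝ :=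
  ∑ j ∈ Finset.range (n + 1),
    C (rchoose (α + n) (n - j) * rchoose (β + n) j) *
      (C (2⁻¹ : ℝ) * (X - 1)) ^ j * (C (2⁻¹ : ℝ) * (X + 1)) ^ (n - j)


lemma rchoose_zero (r : ℝ) : rchoose r 0 = 1 := by simp [rchoose]

lemma rchoose_ne_zero_iff (r : ℝ) (k : ℕ) :
    rchoose r k ≠ 0 ↔ ∀ i < k, r ≠ (i : ℝ) := by
  unfold rchoose
  rw [div_ne_zero_iff]
  constructor
  · rintro ⟨h, -⟩ i hi hr
    exact h (Finset.prod_eq_zero (Finset.mem_range.2 hi) (by rw [hr]; ring))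
  · intro h
    exact ⟨Finset.prod_ne_zero_iff.2 fun i hi => sub_ne_zero.2 (h i (Finset.mem_range.1 hi)),
      Nat.cast_ne_zero.2 (Nat.factorial_ne_zero k)⟩

lemma descPochhammer_smeval_prod (r : ℝ) (k : ℕ) :
    (descPochhammer ℤ k).smeval r = ∏ i ∈ Finset.range k, (r - (i : ℝ)) := by
  induction k with
  | zero => simp [Polynomial.smeval_one]
  | succ n ih =>
    rw [descPochhammer_succ_right, Polynomial.smeval_mul, ih, Finset.prod_range_succ,
      Polynomial.smeval_sub, Polynomial.smeval_X, Polynomial.smeval_natCast]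
    simp

lemma rchoose_add (a b : ℝ) (k : ℕ) :
    rchoose (a + b) k = ∑ ij ∈ Finset.HasAntidiagonal.antidiagonal k, rchoose a ij.1 * rchoose b ij.2 := by
  have h := Ring.descPochhammer_smeval_add (R := ℝ) (r := a) (s := b) k (Commute.all a b)
  simp only [descPochhammer_smeval_prod] at h
  unfold rchoose
  rw [h, Finset.sum_div]
  refine Finset.sum_congr rfl fun ij hij => ?_
  have hk : ij.1 + ij.2 = k := Finset.HasAntidiagonal.mem_antidiagonal.mp hij
  have hchoose : (k.choose ij.1) * ij.1.factorial * ij.2.factorial = k.factorial := by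
    have := Nat.choose_mul_factorial_mul_factorial (le_of_add_le_left hk.le)
    rw [← hk] at this ⊢
    simpa using this
  have h1 : (ij.1.factorial : ℝ) ≠ 0 := Nat.cast_ne_zero.2 (Nat.factorial_ne_zero _)
  have h2 : (ij.2.factorial : ℝ) ≠ 0 := Nat.cast_ne_zero.2 (Nat.factorial_ne_zero _)
  have h3 : (k.factorial : ℝ) ≠ 0 := Nat.cast_ne_zero.2 (Nat.factorial_ne_zero _)
  field_simp
  rw [show ((k.factorial : ℝ)) = ((k.choose ij.1) * ij.1.factorial * ij.2.factorial : ℕ) by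
    rw [hchoose]]
  push_cast
  ring

lemma jacobiP_eval_one (γ δ : ℝ) (n : ℕ) :
    (jacobiP γ δ n).eval 1 = rchoose (γ + n) n := by
  unfold jacobiP
  rw [Polynomial.eval_finset_sum, Finset.sum_eq_single 0]
  · simp [rchoose_zero]
    norm_num
  · intro j hj hj0
    simp [zero_pow hj0]
  · intro h
    exact absurd (Finset.mem_range.2 (Nat.succ_pos n)) h

lemma jacobiP_eval_neg_one (γ δ : ℝ) (n : ℕ) :
    (jacobiP γ δ n).eval (-1) = (-1 : ℝ)^n * rchoose (δ + n) n := by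
  unfold jacobiP
  rw [Polynomial.eval_finset_sum, Finset.sum_eq_single n]
  · simp [rchoose_zero]
    ring
  · intro j hj hj0
    have : n - j ≠ 0 := by
      have := Finset.mem_range.1 hj
      omega
    simp [zero_pow this]
  · intro h
    exact absurd (Finset.mem_range.2 (Nat.lt_succ_self n)) h

lemma jacobiP_coeff (γ δ : ℝ) (m : ℕ) :
    (jacobiP γ δ m).coeff m = (2⁻¹:ℝ)^m * rchoose (γ + δ + 2*m) m := by
  unfold jacobiP
  rw [Polynomial.finset_sum_coeff]
  have hterm : ∀ j ∈ Finset.range (m+1),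
      (C (rchoose (γ + m) (m - j) * rchoose (δ + m) j) *
        (C (2⁻¹:ℝ) * (X - 1)) ^ j * (C (2⁻¹:ℝ) * (X + 1)) ^ (m - j)).coeff m =
      (2⁻¹:ℝ)^m * (rchoose (γ + m) (m - j) * rchoose (δ + m) j) := by
    intro j hj
    have hj' : j ≤ m := Nat.lt_succ_iff.mp (Finset.mem_range.mp hj)
    have hq1 : ((X : ℝ[X]) - 1).Monic := by
      simpa using monic_X_sub_C (1 : ℝ)
    have hq2 : ((X : ℝ[X]) + 1).Monic := by
      simpa using monic_X_add_C (1 : ℝ)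
    have hq : (((X : ℝ[X]) - 1)^j * ((X : ℝ[X]) + 1)^(m-j)).Monic := (hq1.pow j).mul (hq2.pow _)
    have hdeg : (((X : ℝ[X]) - 1)^j * ((X : ℝ[X]) + 1)^(m-j)).natDegree = m := by
      rw [(hq1.pow j).natDegree_mul (hq2.pow _), natDegree_pow, natDegree_pow]
      have e1 : ((X : ℝ[X]) - 1).natDegree = 1 := by simpa using natDegree_X_sub_C (1 : ℝ)
      have e2 : ((X : ℝ[X]) + 1).natDegree = 1 := by
        simpa using natDegree_X_add_C (1 : ℝ)
      rw [e1, e2]; omega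
    have hcoeff : (((X : ℝ[X]) - 1)^j * ((X : ℝ[X]) + 1)^(m-j)).coeff m = 1 := by
      have := hq.coeff_natDegree
      rwa [hdeg] at this
    have hrw : C (rchoose (γ + m) (m - j) * rchoose (δ + m) j) *
        (C (2⁻¹:ℝ) * (X - 1)) ^ j * (C (2⁻¹:ℝ) * (X + 1)) ^ (m - j) =
        C (rchoose (γ + m) (m - j) * rchoose (δ + m) j * (2⁻¹:ℝ)^m) *
          (((X : ℝ[X]) - 1)^j * ((X : ℝ[X]) + 1)^(m-j)) := by
      have h2 : (2⁻¹:ℝ)^j * (2⁻¹:ℝ)^(m-j) = (2⁻¹:ℝ)^m := by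
        rw [← pow_add]; congr 1; omega
      rw [mul_pow, mul_pow, ← C_pow, ← C_pow, ← h2, C_mul, C_mul]
      ring_nf
      simp only [← C_mul]
      ring
    rw [hrw, coeff_C_mul, hcoeff]
    ring
  rw [Finset.sum_congr rfl hterm, ← Finset.mul_sum]
  congr 1
  rw [show γ + δ + 2*(m:ℝ) = (γ + (m:ℝ)) + (δ + (m:ℝ)) by push_cast; ring, rchoose_add,
    Finset.Nat.sum_antidiagonal_eq_sum_range_succ_mk, ← Finset.sum_range_reflect]
  refine Finset.sum_congr rfl fun j hj => ?_
  have hj' : j ≤ m := Nat.lt_succ_iff.mp (Finset.mem_range.mp hj)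
  rw [show m + 1 - 1 - j = m - j by omega, show m - (m - j) = j by omega]

lemma jacobiP_natDegree_le (γ δ : ℝ) (n : ℕ) : (jacobiP γ δ n).natDegree ≤ n := by
  unfold jacobiP
  refine Polynomial.natDegree_sum_le_of_forall_le _ _ fun j hj => ?_
  have hj' : j ≤ n := Nat.lt_succ_iff.mp (Finset.mem_range.mp hj)
  calc (C (rchoose (γ + n) (n - j) * rchoose (δ + n) j) *
        (C (2⁻¹:ℝ) * (X - 1)) ^ j * (C (2⁻¹:ℝ) * (X + 1)) ^ (n - j)).natDegree
      ≤ (C (rchoose (γ + n) (n - j) * rchoose (δ + n) j) *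
        (C (2⁻¹:ℝ) * (X - 1)) ^ j).natDegree + ((C (2⁻¹:ℝ) * (X + 1)) ^ (n - j)).natDegree :=
        natDegree_mul_le
    _ ≤ (C (rchoose (γ + n) (n - j) * rchoose (δ + n) j)).natDegree +
        ((C (2⁻¹:ℝ) * (X - 1)) ^ j).natDegree + ((C (2⁻¹:ℝ) * (X + 1)) ^ (n - j)).natDegree := by
        gcongr; exact natDegree_mul_le
    _ ≤ 0 + j * 1 + (n - j) * 1 := by
        gcongr
        · exact (natDegree_C _).le
        · exact natDegree_pow_le.trans (by
            gcongr
            exact (natDegree_C_mul_le _ _).trans (by simpa using (natDegree_X_sub_C (1:ℝ)).le))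
        · exact natDegree_pow_le.trans (by
            gcongr
            exact (natDegree_C_mul_le _ _).trans (by simpa using (natDegree_X_add_C (1:ℝ)).le))
    _ ≤ n := by omega
lemma cast_sub_one_sub (m j : ℕ) (h : j < m) : ((m - 1 - j : ℕ) : ℝ) = (m : ℝ) - 1 - j := by
  have : (m - 1 - j : ℕ) = m - (1 + j) := by omega
  rw [this, Nat.cast_sub (by omega)]
  push_cast
  ring

lemma reflect_iff (m : ℕ) (hm : 1 ≤ m) (x r : ℝ) (hr : r = (m : ℝ) - 1 - x) :
    (∀ i < m, r ≠ (i : ℝ)) ↔ ∀ j < m, x ≠ (j : ℝ) := by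
  subst hr
  constructor
  · intro h j hj hx
    refine h (m - 1 - j) (by omega) ?_
    rw [cast_sub_one_sub m j hj, hx]
  · intro h i hi he
    refine h (m - 1 - i) (by omega) ?_
    rw [cast_sub_one_sub m i hi]
    linarith


/-- For `α, β > −1`, the polynomial `ξ_{α+1,β−1,m} = P_m^{(−α−1,β−1)}` has degree
exactly `m` and does not vanish at `x = ±1` if and only if `β ≠ 0` and neither `α` nor
`α − β − m + 1` belongs to `{0, 1, …, m−1}`. -/
theorem stmt19 (α β : ℝ) (m : ℕ) (hm : 1 ≤ m) (hα : -1 < α) (hβ : -1 < β) :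
    ((jacobiP (-α - 1) (β - 1) m).natDegree = m ∧
      (jacobiP (-α - 1) (β - 1) m).eval 1 ≠ 0 ∧
      (jacobiP (-α - 1) (β - 1) m).eval (-1) ≠ 0) ↔
    (β ≠ 0 ∧ ∀ j : ℕ, j < m → α ≠ (j : ℝ) ∧ α - β - (m : ℝ) + 1 ≠ (j : ℝ)) := by
  have hdeg_iff : (jacobiP (-α - 1) (β - 1) m).natDegree = m ↔
      (jacobiP (-α - 1) (β - 1) m).coeff m ≠ 0 := by
    constructor
    · intro h
      have hne : jacobiP (-α - 1) (β - 1) m ≠ 0 := by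
        intro h0
        rw [h0] at h
        simp at h
        omega
      have hl : (jacobiP (-α - 1) (β - 1) m).coeff m =
          (jacobiP (-α - 1) (β - 1) m).leadingCoeff := by
        rw [Polynomial.leadingCoeff, h]
      rw [hl]
      exact mt Polynomial.leadingCoeff_eq_zero.mp hne
    · intro h
      exact le_antisymm (jacobiP_natDegree_le _ _ _) (Polynomial.le_natDegree_of_ne_zero h)
  rw [hdeg_iff, jacobiP_coeff, jacobiP_eval_one, jacobiP_eval_neg_one]
  have h2 : ((2:ℝ)⁻¹)^m ≠ 0 := pow_ne_zero _ (by norm_num)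
  have hneg : ((-1:ℝ))^m ≠ 0 := pow_ne_zero _ (by norm_num)
  rw [mul_ne_zero_iff, mul_ne_zero_iff, and_iff_right h2, and_iff_right hneg]
  rw [rchoose_ne_zero_iff, rchoose_ne_zero_iff, rchoose_ne_zero_iff]
  rw [reflect_iff m hm (α - β - (m:ℝ) + 1) _ (by ring),
    reflect_iff m hm α (-α - 1 + (m:ℝ)) (by ring)]
  have hCiff : (∀ i < m, β - 1 + (m:ℝ) ≠ (i:ℝ)) ↔ β ≠ 0 := by
    constructor
    · intro h hb
      refine h (m - 1) (by omega) ?_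
      rw [Nat.cast_sub hm, hb]
      push_cast
      ring
    · intro hb i hi he
      have hlt : (m:ℝ) - 2 < i := by linarith
      have hm2 : m < i + 2 := by exact_mod_cast (by linarith : (m:ℝ) < (i:ℝ) + 2)
      have hieq : i = m - 1 := by omega
      subst hieq
      rw [Nat.cast_sub hm] at he
      push_cast at he
      exact hb (by linarith)
  rw [hCiff]
  constructor
  · rintro ⟨hA, hB, hC⟩
    exact ⟨hC, fun j hj => ⟨hB j hj, hA j hj⟩⟩
  · rintro ⟨hb, h⟩
    exact ⟨fun j hj => (h j hj).2, fun j hj => (h j hj).1, hb⟩
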